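/- Let n ≥ 2 with unique decomposition n = a·f_t + b·f_{t-1}, 1 ≤ a ≤ b ≤ f_t, t ≥ 2. If t is even, then φ^{−t}·(φ·b − a) = φ·n − ⌊φ·n⌋, and if t is odd, then φ^{−t}·(φ·b − a) = ⌈φ·n⌉ − φ·n. -/

import Mathlib

noncomputable def phi : ℝ := (1 + Real.sqrt 5) / 2

lemma phi_sq : phi ^ 2 = phi + 1 := by
  have h5 : Real.sqrt 5 ^ 2 = 5 := Real.sq_sqrt (by norm_num)
  unfold phi; nlinarith [h5]

lemma phi_gt_one : 1 < phi := by
  have h5 : Real.sqrt 5 ^ 2 = 5 := Real.sq_sqrt (by norm_num)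
  have : 1 < Real.sqrt 5 := by nlinarith [Real.sqrt_nonneg 5]
  unfold phi; linarith

lemma phi_pos : 0 < phi := lt_trans one_pos phi_gt_one

lemma phi_pow (k : ℕ) : phi ^ (k + 1) = (Nat.fib (k + 1) : ℝ) * phi + Nat.fib k := by
  induction k with
  | zero => simp
  | succ m ih =>
      have : phi ^ (m + 2) = phi ^ (m + 1) * phi := by ring
      rw [this, ih, Nat.fib_add_two]
      push_cast
      nlinarith [phi_sq]

lemma phi_fib (k : ℕ) :
    phi * Nat.fib k - Nat.fib (k + 1) = (-1 : ℝ) ^ (k + 1) * (phi⁻¹) ^ k := by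
  induction k with
  | zero => simp
  | succ m ih =>
      have hne : phi ≠ 0 := ne_of_gt phi_pos
      have hinv : phi - 1 = phi⁻¹ := by
        field_simp
        nlinarith [phi_sq]
      have h1 : phi * Nat.fib (m + 1) - Nat.fib (m + 2)
          = (phi - 1) * Nat.fib (m + 1) - Nat.fib m := by
        rw [Nat.fib_add_two]; push_cast; ring
      rw [h1, hinv]
      have h2 : phi⁻¹ * (Nat.fib (m + 1) : ℝ) - Nat.fib m
          = -(phi⁻¹ * (phi * Nat.fib m - Nat.fib (m + 1))) := by
        field_simp
        ring
      rw [h2, ih]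
      ring

theorem stmt12 (n : ℤ) (hn : 2 ≤ n) (a b : ℤ) (t : ℕ) (ht : 2 ≤ t)
    (ha : 1 ≤ a) (hab : a ≤ b) (hb : b ≤ (Nat.fib t : ℤ))
    (hdec : n = a * (Nat.fib t : ℤ) + b * (Nat.fib (t - 1) : ℤ)) :
    (Even t → phi ^ (-(t : ℤ)) * (phi * b - a) = phi * n - ⌊phi * (n : ℝ)⌋) ∧
    (Odd t → phi ^ (-(t : ℤ)) * (phi * b - a) = ⌈phi * (n : ℝ)⌉ - phi * n) := by
  obtain ⟨s, rfl⟩ : ∃ s, t = s + 2 := ⟨t - 2, by omega⟩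
  have hsub : s + 2 - 1 = s + 1 := rfl
  rw [hsub] at hdec
  set m : ℤ := a * (Nat.fib (s + 3) : ℤ) + b * (Nat.fib (s + 2) : ℤ) with hm
  set D : ℝ := (phi⁻¹) ^ (s + 2) * (phi * b - a) with hD
  have hne : phi ≠ 0 := ne_of_gt phi_pos
  have hpowpos : 0 < phi ^ (s + 2) := pow_pos phi_pos _
  -- key identity
  have hkey : phi * n = (m : ℝ) + (-1 : ℝ) ^ (s + 2) * D := by
    have e1 := phi_fib (s + 2)
    have e2 := phi_fib (s + 1)
    have hsplit : phi * (n : ℝ) - (m : ℝ)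
        = a * (phi * Nat.fib (s + 2) - Nat.fib (s + 3)) +
          b * (phi * Nat.fib (s + 1) - Nat.fib (s + 2)) := by
      rw [hdec, hm]; push_cast; ring
    have : phi * (n : ℝ) - (m : ℝ)
        = a * ((-1 : ℝ) ^ (s + 3) * (phi⁻¹) ^ (s + 2)) +
          b * ((-1 : ℝ) ^ (s + 2) * (phi⁻¹) ^ (s + 1)) := by
      rw [hsplit, e1, e2]
    have hphiinv : (phi⁻¹) ^ (s + 2) * phi = (phi⁻¹) ^ (s + 1) := by
      rw [pow_succ]; field_simp
    have h4 : (phi⁻¹) ^ (s + 1) = (phi⁻¹) ^ (s + 2) * phi := hphiinv.symm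
    rw [h4] at this
    rw [hD]
    linear_combination this
  -- bounds on D
  have hD0 : 0 < D := by
    have h1 : (0 : ℝ) < phi * b - a := by
      have hb' : (a : ℝ) ≤ b := by exact_mod_cast hab
      have ha' : (1 : ℝ) ≤ a := by exact_mod_cast ha
      nlinarith [phi_gt_one]
    exact mul_pos (pow_pos (inv_pos.mpr phi_pos) _) h1
  have hD1 : D < 1 := by
    have hfib : phi ^ (s + 2) = (Nat.fib (s + 2) : ℝ) * phi + Nat.fib (s + 1) :=
      phi_pow (s + 1)
    have hfib1 : (1 : ℝ) ≤ Nat.fib (s + 1) := by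
      have h1 : 1 ≤ Nat.fib (s + 1) := Nat.fib_pos.mpr (Nat.succ_pos s)
      exact_mod_cast h1
    have hble : (b : ℝ) ≤ (Nat.fib (s + 2) : ℝ) := by exact_mod_cast hb
    have ha' : (1 : ℝ) ≤ a := by exact_mod_cast ha
    have hub : phi * b - a < phi ^ (s + 2) := by
      nlinarith [phi_pos, mul_le_mul_of_nonneg_left hble (le_of_lt phi_pos)]
    have : D = (phi ^ (s + 2))⁻¹ * (phi * b - a) := by rw [hD, inv_pow]
    rw [this]
    rw [inv_mul_lt_iff₀ hpowpos]
    linarith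
  have hzpow : phi ^ (-((s + 2 : ℕ) : ℤ)) * (phi * b - a) = D := by
    rw [zpow_neg, zpow_natCast, ← inv_pow, hD]
  constructor
  · intro hev
    have hpm : (-1 : ℝ) ^ (s + 2) = 1 := hev.neg_one_pow
    rw [hpm] at hkey
    have hfloor : ⌊phi * (n : ℝ)⌋ = m := by
      rw [Int.floor_eq_iff]
      constructor
      · push_cast; linarith
      · push_cast; linarith
    rw [hzpow, hfloor]
    linarith
  · intro hodd
    have hpm : (-1 : ℝ) ^ (s + 2) = -1 := hodd.neg_one_pow
    rw [hpm] at hkey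
    have hceil : ⌈phi * (n : ℝ)⌉ = m := by
      rw [Int.ceil_eq_iff]
      constructor
      · push_cast; linarith
      · push_cast; linarith
    rw [hzpow, hceil]
    linarith
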